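/- arXiv:0801.4862 — 2 statements merged into one kernel-verified Lean document; each statement's English description precedes it below -/
import Mathlib

section
/- Let B be an associative algebra, L a Lie ideal of B (i.e., a subspace with [a,x] ∈ L for all a ∈ B, x ∈ L). Suppose (λ_{k,m}) is a finitely supported family of scalars such that for every n, Σ_{k+m=n} λ_{k,m} = 0. Then for all a ∈ B and b ∈ L, the element Σ_{k,m} λ_{k,m} a^k b a^m belongs to L. -/
section aux

variable {B : Type*} [Ring B] [Algebra ℂ B] (L : Submodule ℂ B)
    (hL : ∀ a : B, ∀ x ∈ L, a * x - x * a ∈ L) (a : B)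

omit [Algebra ℂ B] in
/-- telescoping sum identity -/
lemma tele_sum (x : B) (n : ℕ) :
    ∑ j ∈ Finset.range (n+1), a ^ j * (a * x - x * a) * a ^ (n - j)
      = a ^ (n+1) * x - x * a ^ (n+1) := by
  induction n with
  | zero => simp
  | succ n ih =>
      rw [Finset.sum_range_succ]
      have h : ∀ j ∈ Finset.range (n+1),
          a ^ j * (a * x - x * a) * a ^ (n + 1 - j)
            = (a ^ j * (a * x - x * a) * a ^ (n - j)) * a := by
        intro j hj
        rw [Finset.mem_range] at hj
        have : n + 1 - j = (n - j) + 1 := by omega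
        rw [this, pow_succ]
        noncomm_ring
      rw [Finset.sum_congr rfl h, ← Finset.sum_mul, ih]
      simp only [Nat.sub_self, pow_zero, pow_succ]
      noncomm_ring

include hL in
/-- key lemma: `a^k [a,x] a^m ∈ L` -/
lemma key (n : ℕ) : ∀ x ∈ L, ∀ k m : ℕ, k + m = n →
    a ^ k * (a * x - x * a) * a ^ m ∈ L := by
  induction n using Nat.strong_induction_on with
  | _ n IH =>
    intro x hx k m hkm
    set y := a * x - x * a with hy
    have hyL : y ∈ L := hL a x hx
    -- step: consecutive diagonal terms differ by an element of L
    have step : ∀ k' m' : ℕ, k' + m' + 1 = n →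
        a ^ (k'+1) * y * a ^ m' - a ^ k' * y * a ^ (m'+1) ∈ L := by
      intro k' m' h
      have hid : a ^ (k'+1) * y * a ^ m' - a ^ k' * y * a ^ (m'+1)
          = a ^ k' * (a * y - y * a) * a ^ m' := by
        rw [pow_succ, pow_succ']; noncomm_ring
      rw [hid]
      exact IH (k' + m') (by omega) y hyL k' m' rfl
    -- all diagonal terms ≡ y * a^n mod L
    have diag : ∀ k' m' : ℕ, k' + m' = n →
        a ^ k' * y * a ^ m' - y * a ^ n ∈ L := by
      intro k' m' h
      induction k' generalizing m' with
      | zero => simp only [pow_zero, one_mul]; rw [← h]; simp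
      | succ k'' ih =>
          have h1 := step k'' m' (by omega)
          have h2 := ih (m' + 1) (by omega)
          have := L.add_mem h1 h2
          convert this using 1
          noncomm_ring
    -- sum of diagonal terms is in L
    have hsum : ∑ j ∈ Finset.range (n+1), a ^ j * y * a ^ (n - j) ∈ L := by
      rw [tele_sum]
      exact hL (a ^ (n+1)) x hx
    have hdiff : ∑ j ∈ Finset.range (n+1),
        (a ^ j * y * a ^ (n - j) - y * a ^ n) ∈ L :=
      Submodule.sum_mem L (fun j hj => diag j (n - j) (by rw [Finset.mem_range] at hj; omega))
    have hmain : (((n+1 : ℕ) : ℂ)) • (y * a ^ n) ∈ L := by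
      have heq : (((n+1 : ℕ) : ℂ)) • (y * a ^ n)
          = ∑ j ∈ Finset.range (n+1), a ^ j * y * a ^ (n - j)
            - ∑ j ∈ Finset.range (n+1), (a ^ j * y * a ^ (n - j) - y * a ^ n) := by
        rw [Finset.sum_sub_distrib, Finset.sum_const, Finset.card_range,
          Nat.cast_smul_eq_nsmul]
        abel
      rw [heq]
      exact L.sub_mem hsum hdiff
    have hy_an : y * a ^ n ∈ L := by
      have hne : (((n+1 : ℕ) : ℂ)) ≠ 0 := Nat.cast_ne_zero.mpr (Nat.succ_ne_zero n)
      have := L.smul_mem (((n+1 : ℕ) : ℂ))⁻¹ hmain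
      rwa [inv_smul_smul₀ hne] at this
    have := diag k m hkm
    have := L.add_mem (diag k m hkm) hy_an
    convert this using 1
    noncomm_ring

include hL in
lemma shift (k m : ℕ) : ∀ x ∈ L, a ^ k * x * a ^ m - x * a ^ (k + m) ∈ L := by
  induction k generalizing m with
  | zero => intro x hx; simp
  | succ k ih =>
      intro x hx
      have h1 : a ^ (k+1) * x * a ^ m - a ^ k * x * a ^ (m+1)
          ∈ L := by
        have hid : a ^ (k+1) * x * a ^ m - a ^ k * x * a ^ (m+1)
            = a ^ k * (a * x - x * a) * a ^ m := by
          rw [pow_succ, pow_succ']; noncomm_ring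
        rw [hid]; exact key L hL a (k + m) x hx k m rfl
      have h2 := ih (m + 1) x hx
      have := L.add_mem h1 h2
      have he : k + (m + 1) = k + 1 + m := by omega
      rw [he] at this
      convert this using 1
      noncomm_ring

end aux

/-- If `L` is a Lie ideal of an associative algebra `B` and `(λ_{k,m})` is a
finitely supported family of scalars with `Σ_{k+m=n} λ_{k,m} = 0` for every `n`, then
`Σ_{k,m} λ_{k,m} a^k b a^m ∈ L` for all `a ∈ B`, `b ∈ L`. -/
theorem stmt3 (B : Type*) [Ring B] [Algebra ℂ B] (L : Submodule ℂ B)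
    (hL : ∀ a : B, ∀ x ∈ L, a * x - x * a ∈ L)
    (s : Finset (ℕ × ℕ)) (lam : ℕ × ℕ → ℂ)
    (hlam : ∀ n : ℕ, ∑ p ∈ s.filter (fun p => p.1 + p.2 = n), lam p = 0)
    (a b : B) (hb : b ∈ L) :
    (∑ p ∈ s, lam p • (a ^ p.1 * b * a ^ p.2)) ∈ L := by
  have hdec : (∑ p ∈ s, lam p • (a ^ p.1 * b * a ^ p.2))
      = (∑ p ∈ s, lam p • (a ^ p.1 * b * a ^ p.2 - b * a ^ (p.1 + p.2)))
        + ∑ p ∈ s, lam p • (b * a ^ (p.1 + p.2)) := by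
    rw [← Finset.sum_add_distrib]
    refine Finset.sum_congr rfl fun p hp => ?_
    rw [← smul_add, sub_add_cancel]
  rw [hdec]
  apply L.add_mem
  · exact Submodule.sum_mem L fun p hp =>
      L.smul_mem _ (shift L hL a p.1 p.2 b hb)
  · have : (∑ p ∈ s, lam p • (b * a ^ (p.1 + p.2))) = 0 := by
      rw [← Finset.sum_fiberwise_of_maps_to (g := fun p : ℕ × ℕ => p.1 + p.2)
        (t := s.image (fun p => p.1 + p.2)) (fun p hp => Finset.mem_image_of_mem _ hp)]
      apply Finset.sum_eq_zero
      intro n hn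
      have : ∑ p ∈ s.filter (fun p => p.1 + p.2 = n), lam p • (b * a ^ (p.1 + p.2))
          = ∑ p ∈ s.filter (fun p => p.1 + p.2 = n), lam p • (b * a ^ n) := by
        apply Finset.sum_congr rfl
        intro p hp
        rw [Finset.mem_filter] at hp
        rw [hp.2]
      rw [this, ← Finset.sum_smul, hlam n, zero_smul]
    rw [this]
    exact L.zero_mem
end

section
/- Let E be the subalgebra of the field ℂ(x,y) of rational functions in two variables generated by all elements f(x) - f(y) with f ∈ ℂ(t) a rational function in one variable. Then the function (x - y)/x does not belong to E. -/
set_option maxHeartbeats 1000000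
set_option synthInstance.maxHeartbeats 400000
open MvPolynomial Polynomial TrivSqZeroExt

noncomputable section
abbrev R2 := MvPolynomial (Fin 2) ℂ
abbrev KK := FractionRing R2
abbrev FF := RatFunc ℂ
abbrev AA := DualNumber FF

def δ : R2 →ₐ[ℂ] Polynomial ℂ := aeval ![Polynomial.X, Polynomial.X]

def D0 : R2 →ₐ[ℂ] AA := aeval ![inl RatFunc.X, inl RatFunc.X + (DualNumber.eps)]

-- fst ∘ D0 = algebraMap ∘ δ
lemma fst_D0 (a : R2) : fst (D0 a) = algebraMap (Polynomial ℂ) FF (δ a) := by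
  have : (TrivSqZeroExt.fstHom ℂ FF FF).comp D0 =
      ((IsScalarTower.toAlgHom ℂ (Polynomial ℂ) FF)).comp δ := by
    apply MvPolynomial.algHom_ext
    intro i
    fin_cases i <;>
      simp [D0, δ, RatFunc.algebraMap_X]
  exact DFunLike.congr_fun this a

lemma aeval_ratfuncX (q : Polynomial ℂ) :
    Polynomial.aeval (RatFunc.X : FF) q = algebraMap (Polynomial ℂ) FF q := by
  have : (Polynomial.aeval (RatFunc.X : FF) : Polynomial ℂ →ₐ[ℂ] FF) =
      IsScalarTower.toAlgHom ℂ (Polynomial ℂ) FF := by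
    apply Polynomial.algHom_ext
    simp [RatFunc.algebraMap_X]
  exact DFunLike.congr_fun this q

lemma fst_aeval_z (p : Polynomial ℂ) :
    fst (Polynomial.aeval (inl RatFunc.X + DualNumber.eps : AA) p)
      = Polynomial.aeval (RatFunc.X : FF) p := by
  rw [show (fst (Polynomial.aeval (inl RatFunc.X + DualNumber.eps : AA) p) : FF)
      = TrivSqZeroExt.fstHom ℂ FF FF (Polynomial.aeval (inl RatFunc.X + DualNumber.eps : AA) p)
      from rfl,
    ← Polynomial.aeval_algHom_apply (TrivSqZeroExt.fstHom ℂ FF FF)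
      (inl RatFunc.X + DualNumber.eps) p]
  simp

lemma snd_aeval_z (p : Polynomial ℂ) :
    snd (Polynomial.aeval (inl RatFunc.X + DualNumber.eps : AA) p)
      = Polynomial.aeval (RatFunc.X : FF) (derivative p) := by
  induction p using Polynomial.induction_on with
  | C a => simp [Polynomial.aeval_C, TrivSqZeroExt.algebraMap_eq_inl']
  | add p q hp hq => simp [hp, hq]
  | monomial n a ih =>
      have h1 : (Polynomial.C a * Polynomial.X ^ (n+1)) =
          (Polynomial.C a * Polynomial.X ^ n) * Polynomial.X := by ring
      have h2 : Polynomial.aeval (inl RatFunc.X + DualNumber.eps : AA)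
          (Polynomial.C a * Polynomial.X ^ n * Polynomial.X)
          = Polynomial.aeval (inl RatFunc.X + DualNumber.eps : AA)
              (Polynomial.C a * Polynomial.X ^ n) * (inl RatFunc.X + DualNumber.eps) := by
        rw [map_mul, Polynomial.aeval_X]
      have h3 : derivative (Polynomial.C a * Polynomial.X ^ n * Polynomial.X)
          = derivative (Polynomial.C a * Polynomial.X ^ n) * Polynomial.X
            + Polynomial.C a * Polynomial.X ^ n := by
        rw [derivative_mul, derivative_X, mul_one]
      have h4 : Polynomial.aeval (RatFunc.X : FF)
          (derivative (Polynomial.C a * Polynomial.X ^ n) * Polynomial.X)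
          = Polynomial.aeval (RatFunc.X : FF) (derivative (Polynomial.C a * Polynomial.X ^ n))
              * RatFunc.X := by
        rw [map_mul, Polynomial.aeval_X]
      rw [h1, h2, TrivSqZeroExt.snd_mul, h3, map_add, h4, ih, fst_aeval_z]
      simp only [fst_add, snd_add, fst_inl, snd_inl, DualNumber.fst_eps, DualNumber.snd_eps,
        add_zero, zero_add, op_smul_eq_smul, smul_eq_mul]
      ring

lemma D0_X0 : D0 (MvPolynomial.X 0) = inl RatFunc.X := by simp [D0]
lemma D0_X1 : D0 (MvPolynomial.X 1) = inl RatFunc.X + DualNumber.eps := by simp [D0]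

lemma D0_aeval0 (p : Polynomial ℂ) :
    D0 (Polynomial.aeval (MvPolynomial.X 0) p) = inl (algebraMap (Polynomial ℂ) FF p) := by
  rw [← Polynomial.aeval_algHom_apply, D0_X0,
    show (inl RatFunc.X : AA) = TrivSqZeroExt.inlAlgHom ℂ FF FF RatFunc.X from rfl,
    Polynomial.aeval_algHom_apply, aeval_ratfuncX]
  rfl

lemma D0_aeval1 (p : Polynomial ℂ) :
    fst (D0 (Polynomial.aeval (MvPolynomial.X 1) p)) = algebraMap (Polynomial ℂ) FF p
    ∧ snd (D0 (Polynomial.aeval (MvPolynomial.X 1) p))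
        = algebraMap (Polynomial ℂ) FF (derivative p) := by
  rw [← Polynomial.aeval_algHom_apply, D0_X1]
  exact ⟨by rw [fst_aeval_z, aeval_ratfuncX], by rw [snd_aeval_z, aeval_ratfuncX]⟩

lemma δ_aeval0 (p : Polynomial ℂ) : δ (Polynomial.aeval (MvPolynomial.X 0) p) = p := by
  rw [← Polynomial.aeval_algHom_apply]
  simp [δ]
lemma δ_aeval1 (p : Polynomial ℂ) : δ (Polynomial.aeval (MvPolynomial.X 1) p) = p := by
  rw [← Polynomial.aeval_algHom_apply]
  simp [δ]

/-- The set of derivatives of rational functions, as a submodule of `ℂ(x)`. -/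
def Der : Submodule ℂ FF where
  carrier := {h | ∃ p r : Polynomial ℂ, r ≠ 0 ∧
    h = algebraMap (Polynomial ℂ) FF (derivative p * r - p * derivative r)
          / algebraMap (Polynomial ℂ) FF (r * r)}
  zero_mem' := ⟨0, 1, one_ne_zero, by simp⟩
  add_mem' := by
    rintro a b ⟨p1, r1, hr1, rfl⟩ ⟨p2, r2, hr2, rfl⟩
    refine ⟨p1 * r2 + p2 * r1, r1 * r2, mul_ne_zero hr1 hr2, ?_⟩
    have h1 : algebraMap (Polynomial ℂ) FF r1 ≠ 0 := by
      simpa using (RatFunc.algebraMap_ne_zero hr1)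
    have h2 : algebraMap (Polynomial ℂ) FF r2 ≠ 0 := by
      simpa using (RatFunc.algebraMap_ne_zero hr2)
    simp only [derivative_add, derivative_mul, map_add, map_mul, map_sub]
    field_simp
    ring
  smul_mem' := by
    rintro c x ⟨p, r, hr, rfl⟩
    refine ⟨Polynomial.C c * p, r, hr, ?_⟩
    have h1 : algebraMap (Polynomial ℂ) FF r ≠ 0 := by
      simpa using (RatFunc.algebraMap_ne_zero hr)
    simp only [derivative_mul, derivative_C, map_add, map_mul, map_sub, zero_mul, zero_add]
    have hC : (algebraMap ℂ FF) c = algebraMap (Polynomial ℂ) FF (Polynomial.C c) := by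
      rw [IsScalarTower.algebraMap_apply ℂ (Polynomial ℂ) FF]
      norm_cast
    rw [Algebra.smul_def, hC]
    field_simp

lemma s_ne_zero {s : R2} (h : δ s ≠ 0) : s ≠ 0 := fun hs => h (by simp [hs])

lemma algK_ne_zero {s : R2} (h : s ≠ 0) : algebraMap R2 KK s ≠ 0 :=
  fun hs => h (IsFractionRing.injective R2 KK (by simpa using hs))

lemma vs_ne_zero {s : R2} (h : δ s ≠ 0) : fst (D0 s) ≠ 0 := by
  rw [fst_D0]; exact RatFunc.algebraMap_ne_zero h

/-- The obstruction subalgebra. -/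
def T : NonUnitalSubalgebra ℂ KK where
  carrier := {k | ∃ a s : R2, δ s ≠ 0 ∧
    k = algebraMap R2 KK a / algebraMap R2 KK s ∧
    fst (D0 a) = 0 ∧ snd (D0 a) / fst (D0 s) ∈ Der}
  zero_mem' := ⟨0, 1, by simp, by simp, by simp, by simpa using Der.zero_mem⟩
  add_mem' := by
    rintro x y ⟨a, s, hs, rfl, hfa, hda⟩ ⟨a', s', hs', rfl, hfa', hda'⟩
    refine ⟨a * s' + a' * s, s * s', by simp [map_mul]; exact ⟨hs, hs'⟩, ?_, ?_, ?_⟩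
    · have h1 := algK_ne_zero (s_ne_zero hs)
      have h2 := algK_ne_zero (s_ne_zero hs')
      simp only [map_add, map_mul]
      field_simp
    · simp only [map_add, map_mul, fst_add, fst_mul, hfa, hfa', zero_mul, add_zero]
    · have h1 := vs_ne_zero hs
      have h2 := vs_ne_zero hs'
      have key : snd (D0 (a * s' + a' * s)) / fst (D0 (s * s'))
          = snd (D0 a) / fst (D0 s) + snd (D0 a') / fst (D0 s') := by
        simp only [map_add, map_mul, snd_add, TrivSqZeroExt.snd_mul, fst_mul, hfa, hfa',
          zero_smul, zero_add, op_smul_eq_smul, smul_eq_mul]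
        field_simp
        ring
      rw [key]
      exact Der.add_mem hda hda'
  mul_mem' := by
    rintro x y ⟨a, s, hs, rfl, hfa, hda⟩ ⟨a', s', hs', rfl, hfa', hda'⟩
    refine ⟨a * a', s * s', by simp [map_mul]; exact ⟨hs, hs'⟩, ?_, ?_, ?_⟩
    · have h1 := algK_ne_zero (s_ne_zero hs)
      have h2 := algK_ne_zero (s_ne_zero hs')
      simp only [map_mul]
      field_simp
    · simp only [map_mul, fst_mul, hfa, zero_mul]
    · have : snd (D0 (a * a')) = 0 := by
        simp only [map_mul, TrivSqZeroExt.snd_mul, hfa, hfa', zero_smul, zero_add,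
          op_smul_eq_smul, smul_zero]
      rw [this, zero_div]
      exact Der.zero_mem
  smul_mem' := by
    rintro c x ⟨a, s, hs, rfl, hfa, hda⟩
    refine ⟨c • a, s, hs, ?_, ?_, ?_⟩
    · rw [Algebra.smul_def c a, map_mul, ← IsScalarTower.algebraMap_apply, ← Algebra.smul_def,
        smul_div_assoc]
    · rw [map_smul, TrivSqZeroExt.fst_smul, hfa, smul_zero]
    · rw [map_smul, TrivSqZeroExt.snd_smul, smul_div_assoc]
      exact Der.smul_mem c hda

lemma aevalX_ne_zero {r : Polynomial ℂ} (hr : r ≠ 0) (i : Fin 2) :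
    Polynomial.aeval (MvPolynomial.X (R := ℂ) i) r ≠ 0 := by
  fin_cases i
  · exact fun h => hr (by rw [← δ_aeval0 r, show (MvPolynomial.X (0 : Fin 2) : R2)
      = MvPolynomial.X ((fun i => i) (⟨0, by omega⟩ : Fin 2)) from rfl, h, map_zero])
  · exact fun h => hr (by rw [← δ_aeval1 r, show (MvPolynomial.X (1 : Fin 2) : R2)
      = MvPolynomial.X ((fun i => i) (⟨1, by omega⟩ : Fin 2)) from rfl, h, map_zero])

lemma gen_mem (p r : Polynomial ℂ) (hr : r ≠ 0) :
    (algebraMap R2 KK (Polynomial.aeval (MvPolynomial.X 0) p) /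
        algebraMap R2 KK (Polynomial.aeval (MvPolynomial.X 0) r) -
      algebraMap R2 KK (Polynomial.aeval (MvPolynomial.X 1) p) /
        algebraMap R2 KK (Polynomial.aeval (MvPolynomial.X 1) r)) ∈ T := by
  refine ⟨Polynomial.aeval (MvPolynomial.X 0) p * Polynomial.aeval (MvPolynomial.X 1) r
      - Polynomial.aeval (MvPolynomial.X 1) p * Polynomial.aeval (MvPolynomial.X 0) r,
    Polynomial.aeval (MvPolynomial.X 0) r * Polynomial.aeval (MvPolynomial.X 1) r,
    ?_, ?_, ?_, ?_⟩
  · rw [map_mul, δ_aeval0, δ_aeval1]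
    exact mul_ne_zero hr hr
  · have h0 := algK_ne_zero (aevalX_ne_zero hr 0)
    have h1 := algK_ne_zero (aevalX_ne_zero hr 1)
    simp only [map_mul, map_sub]
    field_simp
  · simp only [map_sub, map_mul, fst_sub, fst_mul, D0_aeval0, fst_inl,
      (D0_aeval1 p).1, (D0_aeval1 r).1]
    ring
  · have hvr : algebraMap (Polynomial ℂ) FF r ≠ 0 := RatFunc.algebraMap_ne_zero hr
    have hsnd : snd (D0 (Polynomial.aeval (MvPolynomial.X 0) p
          * Polynomial.aeval (MvPolynomial.X 1) r
        - Polynomial.aeval (MvPolynomial.X 1) p * Polynomial.aeval (MvPolynomial.X 0) r))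
        = algebraMap (Polynomial ℂ) FF p * algebraMap (Polynomial ℂ) FF (derivative r)
          - algebraMap (Polynomial ℂ) FF r * algebraMap (Polynomial ℂ) FF (derivative p) := by
      simp only [map_sub, map_mul, snd_sub, TrivSqZeroExt.snd_mul, D0_aeval0, fst_inl, snd_inl,
        (D0_aeval1 p).1, (D0_aeval1 p).2, (D0_aeval1 r).1, (D0_aeval1 r).2,
        op_smul_eq_smul, smul_eq_mul, smul_zero, mul_zero, zero_add, add_zero]
    have hfst : fst (D0 (Polynomial.aeval (MvPolynomial.X 0) r
          * Polynomial.aeval (MvPolynomial.X 1) r))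
        = algebraMap (Polynomial ℂ) FF (r * r) := by
      simp only [map_mul, fst_mul, D0_aeval0, fst_inl, (D0_aeval1 r).1]
    rw [hsnd, hfst]
    exact ⟨-p, r, hr, by push_cast [map_sub, map_mul, map_neg]; ring⟩

lemma exists_pow_X : ∀ (d : ℕ) (v : Polynomial ℂ), v.natDegree ≤ d → v ≠ 0 →
    ∃ (M : ℕ) (Q : Polynomial ℂ), ¬ (Polynomial.X ∣ Q) ∧ v = Polynomial.X ^ M * Q := by
  intro d
  induction d with
  | zero =>
      intro v hdeg hv
      refine ⟨0, v, ?_, by ring⟩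
      intro ⟨w, hw⟩
      rcases eq_or_ne w 0 with rfl | hw0
      · exact hv (by simpa using hw)
      · have : v.natDegree = w.natDegree + 1 := by
          rw [hw, Polynomial.natDegree_mul Polynomial.X_ne_zero hw0,
            Polynomial.natDegree_X]
          omega
        omega
  | succ d ih =>
      intro v hdeg hv
      by_cases hX : Polynomial.X ∣ v
      · obtain ⟨w, hw⟩ := hX
        have hw0 : w ≠ 0 := fun h => hv (by simp [hw, h])
        have hdw : w.natDegree ≤ d := by
          have : v.natDegree = w.natDegree + 1 := by
            rw [hw, Polynomial.natDegree_mul Polynomial.X_ne_zero hw0,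
              Polynomial.natDegree_X]
            omega
          omega
        obtain ⟨M, Q, hQ, hQeq⟩ := ih w hdw hw0
        exact ⟨M + 1, Q, hQ, by rw [hw, hQeq]; ring⟩
      · exact ⟨0, v, hX, by ring⟩

lemma X_not_dvd_iff (q : Polynomial ℂ) : ¬ (Polynomial.X ∣ q) ↔ q.coeff 0 ≠ 0 := by
  rw [Polynomial.X_dvd_iff]

lemma keyaux (m n : ℕ) (q s : Polynomial ℂ) (hq : ¬ Polynomial.X ∣ q)
    (hs : ¬ Polynomial.X ∣ s)
    (h : Polynomial.X * (derivative (Polynomial.X ^ (m+1) * q) * (Polynomial.X ^ (n+1) * s)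
        - (Polynomial.X ^ (m+1) * q) * derivative (Polynomial.X ^ (n+1) * s))
      = (Polynomial.X ^ (n+1) * s) * (Polynomial.X ^ (n+1) * s)) : False := by
  have hdq : derivative (Polynomial.X ^ (m+1) * q)
      = (Polynomial.C (m:ℂ) + 1) * Polynomial.X ^ m * q
        + Polynomial.X ^ (m+1) * derivative q := by
    rw [derivative_mul, Polynomial.derivative_X_pow]
    simp only [Nat.cast_add, Nat.cast_one, map_add, map_one, Nat.add_sub_cancel]
  have hds : derivative (Polynomial.X ^ (n+1) * s)
      = (Polynomial.C (n:ℂ) + 1) * Polynomial.X ^ n * s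
        + Polynomial.X ^ (n+1) * derivative s := by
    rw [derivative_mul, Polynomial.derivative_X_pow]
    simp only [Nat.cast_add, Nat.cast_one, map_add, map_one, Nat.add_sub_cancel]
  rw [hdq, hds] at h
  set B : Polynomial ℂ := (Polynomial.C (m:ℂ) - Polynomial.C (n:ℂ)) * q * s
      + Polynomial.X * (derivative q * s - q * derivative s) with hB
  have hXpow : ∀ k : ℕ, (Polynomial.X : Polynomial ℂ) ^ k ≠ 0 :=
    fun k => pow_ne_zero k Polynomial.X_ne_zero
  have hmain : Polynomial.X ^ (m + n + 2) * B = Polynomial.X ^ (2*n + 2) * (s * s) := by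
    rw [hB]
    linear_combination (Polynomial.X : Polynomial ℂ) ^ 0 * h
  rcases lt_trichotomy m n with hlt | heq | hgt
  · -- m < n : B = X^(n-m) * s * s
    have hBe : B = Polynomial.X ^ (n - m) * (s * s) := by
      apply mul_left_cancel₀ (hXpow (m + n + 2))
      rw [hmain, show 2*n+2 = (m+n+2)+(n-m) by omega, pow_add, mul_assoc]
    have hdvd : Polynomial.X ∣ B := by
      rw [hBe]
      exact Dvd.dvd.mul_right (dvd_pow_self _ (by omega)) _
    rw [hB] at hdvd
    have hd2 : Polynomial.X ∣ (Polynomial.C (m:ℂ) - Polynomial.C (n:ℂ)) * q * s := by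
      have := dvd_sub hdvd (Dvd.dvd.mul_right (dvd_refl Polynomial.X)
        (derivative q * s - q * derivative s))
      simpa using this
    have hC : ¬ Polynomial.X ∣ ((Polynomial.C (m:ℂ) - Polynomial.C (n:ℂ)) * q * s) := by
      rw [X_not_dvd_iff]
      simp only [Polynomial.mul_coeff_zero, Polynomial.coeff_sub, Polynomial.coeff_C_zero]
      refine mul_ne_zero (mul_ne_zero ?_ ((X_not_dvd_iff q).mp hq)) ((X_not_dvd_iff s).mp hs)
      have hmn : (m:ℂ) ≠ (n:ℂ) := by exact_mod_cast (by omega : m ≠ n)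
      exact sub_ne_zero.mpr hmn
    exact hC hd2
  · -- m = n
    subst heq
    have hBe : B = s * s := by
      apply mul_left_cancel₀ (hXpow (m + m + 2))
      rw [hmain, show 2*m+2 = m+m+2 by omega]
    have hdvd : Polynomial.X ∣ s * s := by
      rw [← hBe, hB]
      simp
    rcases (Polynomial.prime_X.dvd_mul.mp hdvd) with h' | h' <;> exact hs h'
  · -- n < m
    have hBe : Polynomial.X ^ (m - n) * B = s * s := by
      apply mul_left_cancel₀ (hXpow (2*n + 2))
      rw [← hmain, ← mul_assoc, ← pow_add, show 2*n+2+(m-n) = m+n+2 by omega]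
    have hdvd : Polynomial.X ∣ s * s := by
      rw [← hBe]
      exact Dvd.dvd.mul_right (dvd_pow_self _ (by omega)) _
    rcases (Polynomial.prime_X.dvd_mul.mp hdvd) with h' | h' <;> exact hs h'

lemma keymain (p r : Polynomial ℂ) (hr : r ≠ 0) :
    Polynomial.X * (derivative p * r - p * derivative r) ≠ r * r := by
  intro h
  have hp : p ≠ 0 := by
    rintro rfl
    simp only [derivative_zero, zero_mul, mul_zero, sub_zero, zero_sub, mul_neg, neg_zero] at h
    exact mul_ne_zero hr hr h.symm
  have h2 : Polynomial.X * (derivative (Polynomial.X * p) * (Polynomial.X * r)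
      - (Polynomial.X * p) * derivative (Polynomial.X * r))
      = (Polynomial.X * r) * (Polynomial.X * r) := by
    rw [derivative_mul, derivative_mul, derivative_X]
    linear_combination (Polynomial.X : Polynomial ℂ)^2 * h
  obtain ⟨M, Q, hQ, hQeq⟩ := exists_pow_X (Polynomial.X * p).natDegree (Polynomial.X * p)
    le_rfl (mul_ne_zero Polynomial.X_ne_zero hp)
  obtain ⟨N, S, hS, hSeq⟩ := exists_pow_X (Polynomial.X * r).natDegree (Polynomial.X * r)
    le_rfl (mul_ne_zero Polynomial.X_ne_zero hr)
  match M, N with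
  | 0, _ => exact hQ (by have := hQeq ▸ dvd_mul_right Polynomial.X p; simpa using this)
  | _+1, 0 => exact hS (by have := hSeq ▸ dvd_mul_right Polynomial.X r; simpa using this)
  | m+1, n+1 =>
    rw [hQeq, hSeq] at h2
    exact keyaux m n Q S hQ hS h2

theorem stmt13_aux :
    (algebraMap (MvPolynomial (Fin 2) ℂ) (FractionRing (MvPolynomial (Fin 2) ℂ))
          (MvPolynomial.X 0) -
        algebraMap (MvPolynomial (Fin 2) ℂ) (FractionRing (MvPolynomial (Fin 2) ℂ))
          (MvPolynomial.X 1)) /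
      algebraMap (MvPolynomial (Fin 2) ℂ) (FractionRing (MvPolynomial (Fin 2) ℂ))
        (MvPolynomial.X 0) ∉
    NonUnitalAlgebra.adjoin ℂ
      {q : FractionRing (MvPolynomial (Fin 2) ℂ) | ∃ (p r : Polynomial ℂ), r ≠ 0 ∧
        q = algebraMap (MvPolynomial (Fin 2) ℂ) _ (Polynomial.aeval (MvPolynomial.X 0) p) /
              algebraMap (MvPolynomial (Fin 2) ℂ) _ (Polynomial.aeval (MvPolynomial.X 0) r) -
            algebraMap (MvPolynomial (Fin 2) ℂ) _ (Polynomial.aeval (MvPolynomial.X 1) p) /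
              algebraMap (MvPolynomial (Fin 2) ℂ) _ (Polynomial.aeval (MvPolynomial.X 1) r)} := by
  intro hmem
  have hsub : {q : FractionRing (MvPolynomial (Fin 2) ℂ) | ∃ (p r : Polynomial ℂ), r ≠ 0 ∧
      q = algebraMap (MvPolynomial (Fin 2) ℂ) _ (Polynomial.aeval (MvPolynomial.X 0) p) /
            algebraMap (MvPolynomial (Fin 2) ℂ) _ (Polynomial.aeval (MvPolynomial.X 0) r) -
          algebraMap (MvPolynomial (Fin 2) ℂ) _ (Polynomial.aeval (MvPolynomial.X 1) p) /
            algebraMap (MvPolynomial (Fin 2) ℂ) _ (Polynomial.aeval (MvPolynomial.X 1) r)}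
      ⊆ ↑T := by
    rintro k ⟨p, r, hr, rfl⟩
    exact gen_mem p r hr
  have hT := NonUnitalAlgebra.adjoin_le hsub hmem
  obtain ⟨a, s, hs, heq, hfa, hda⟩ := hT
  have hx : (MvPolynomial.X 0 : R2) ≠ 0 := MvPolynomial.X_ne_zero 0
  have hx' : algebraMap R2 KK (MvPolynomial.X 0) ≠ 0 := algK_ne_zero hx
  have hs' : algebraMap R2 KK s ≠ 0 := algK_ne_zero (s_ne_zero hs)
  rw [div_eq_div_iff hx' hs'] at heq
  have heqR : (MvPolynomial.X 0 - MvPolynomial.X 1) * s = a * MvPolynomial.X 0 := by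
    apply IsFractionRing.injective R2 KK
    rw [map_mul, map_mul, map_sub]
    exact heq
  have hD := congrArg (fun z => snd (D0 z)) heqR
  simp only [map_mul, map_sub, D0_X0, D0_X1] at hD
  have hkey : -(fst (D0 s)) = snd (D0 a) * RatFunc.X := by
    have hl : inl RatFunc.X - (inl RatFunc.X + DualNumber.eps) = (-DualNumber.eps : AA) := by
      ring
    rw [hl] at hD
    simpa [TrivSqZeroExt.snd_mul, op_smul_eq_smul, smul_eq_mul, hfa,
      DualNumber.fst_eps, DualNumber.snd_eps] using hD
  have hvs := vs_ne_zero hs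
  have hXne : (RatFunc.X : FF) ≠ 0 := RatFunc.X_ne_zero
  have hfrac : snd (D0 a) / fst (D0 s) = -1 / RatFunc.X := by
    rw [div_eq_div_iff hvs hXne]
    linear_combination -hkey
  rw [hfrac] at hda
  obtain ⟨P, R, hR, hE⟩ := hda
  have hRne : algebraMap (Polynomial ℂ) FF (R * R) ≠ 0 :=
    RatFunc.algebraMap_ne_zero (mul_ne_zero hR hR)
  rw [div_eq_div_iff hXne hRne] at hE
  have hE2 : (-1 : Polynomial ℂ) * (R * R)
      = (derivative P * R - P * derivative R) * Polynomial.X := by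
    apply IsFractionRing.injective (Polynomial ℂ) FF
    have hsplit : algebraMap (Polynomial ℂ) FF ((derivative P * R - P * derivative R)
        * Polynomial.X) = algebraMap (Polynomial ℂ) FF (derivative P * R - P * derivative R)
        * RatFunc.X := by
      rw [map_mul, RatFunc.algebraMap_X]
    rw [hsplit, map_mul, map_neg, map_one]
    exact hE
  exact keymain (-P) R hR (by rw [derivative_neg]; linear_combination hE2)


end

/-- In the field `ℂ(x,y)` of rational functions in two variables, the element
`(x - y)/x` does not belong to the (non-unital) subalgebra generated by all differences
`f(x) - f(y)` where `f = p/r` ranges over rational functions in one variable. -/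
theorem stmt13 :
    (algebraMap (MvPolynomial (Fin 2) ℂ) (FractionRing (MvPolynomial (Fin 2) ℂ))
          (MvPolynomial.X 0) -
        algebraMap (MvPolynomial (Fin 2) ℂ) (FractionRing (MvPolynomial (Fin 2) ℂ))
          (MvPolynomial.X 1)) /
      algebraMap (MvPolynomial (Fin 2) ℂ) (FractionRing (MvPolynomial (Fin 2) ℂ))
        (MvPolynomial.X 0) ∉
    NonUnitalAlgebra.adjoin ℂ
      {q : FractionRing (MvPolynomial (Fin 2) ℂ) | ∃ (p r : Polynomial ℂ), r ≠ 0 ∧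
        q = algebraMap (MvPolynomial (Fin 2) ℂ) _ (Polynomial.aeval (MvPolynomial.X 0) p) /
              algebraMap (MvPolynomial (Fin 2) ℂ) _ (Polynomial.aeval (MvPolynomial.X 0) r) -
            algebraMap (MvPolynomial (Fin 2) ℂ) _ (Polynomial.aeval (MvPolynomial.X 1) p) /
              algebraMap (MvPolynomial (Fin 2) ℂ) _ (Polynomial.aeval (MvPolynomial.X 1) r)} :=
  stmt13_aux
end
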